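/- Let C ⊆ R^{q+1} be a closed strongly convex cone contained in the half-space x_{q+1} ≥ 0, meeting the hyperplane x_{q+1} = 0 only at the origin, and let Δ = C ∩ {x_{q+1} = 1}. Let f: R^{q+1} → R be a polynomial of degree d with top-degree homogeneous component f^{(d)}. Then lim_{k→∞} (1/k^{q+d}) Σ_{x ∈ C ∩ Z^{q+1}, x_{q+1} = k} f(x) = ∫_Δ f^{(d)}(x) dμ, where dμ is the q-dimensional Lebesgue measure on the hyperplane x_{q+1} = 1. -/

import Mathlib

open Filter Topology MeasureTheory

set_option maxHeartbeats 1000000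



section RiemannSum

open BoxIntegral BoxIntegral.unitPartition Bornology

variable {ι : Type*} [Fintype ι]

private lemma latticeSet_finite {s : Set (ι → ℝ)} (hb : IsBounded s) {n : ℕ} (hn : n ≠ 0) :
    {v : ι → ℤ | (fun i ↦ (v i : ℝ) / n) ∈ s}.Finite := by
  classical
  obtain ⟨R, hR⟩ := hb.subset_closedBall 0
  set M : ℤ := ⌈(n : ℝ) * R⌉
  refine (Set.finite_Icc (fun _ : ι ↦ -M) (fun _ ↦ M)).subset fun v hv ↦ ?_
  have hn' : (0 : ℝ) < n := by positivity
  have h1 : ∀ i, |(v i : ℝ) / n| ≤ R := fun i ↦ by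
    have := hR hv
    rw [Metric.mem_closedBall, dist_zero_right] at this
    calc |(v i : ℝ) / n| = ‖(fun j ↦ (v j : ℝ) / n) i‖ := rfl
    _ ≤ _ := (norm_le_pi_norm _ i).trans this
  constructor <;> intro i
  · have h2 : -((n : ℝ) * R) ≤ (v i : ℝ) := by
      have := (abs_le.mp (h1 i)).1
      rw [le_div_iff₀ hn'] at this
      nlinarith
    have : (-M : ℝ) ≤ (v i : ℝ) := le_trans (by simpa using Int.le_ceil ((n : ℝ) * R)) h2
    exact_mod_cast this
  · have h2 : (v i : ℝ) ≤ (n : ℝ) * R := by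
      have := (abs_le.mp (h1 i)).2
      rw [div_le_iff₀ hn'] at this
      nlinarith
    have : (v i : ℝ) ≤ (M : ℝ) := h2.trans (Int.le_ceil _)
    exact_mod_cast this

private lemma integralSum_prepartition (F : (ι → ℝ) → ℝ) (s : Set (ι → ℝ)) {B : Box ι}
    (hB : hasIntegralVertices B) (hs : s ⊆ ↑B) (n : ℕ) [NeZero n] :
    BoxIntegral.integralSum (s.indicator F)
        ((volume : Measure (ι → ℝ)).toBoxAdditive.toSMul) (prepartition n B)
      = (∑' v : {v : ι → ℤ // (fun i ↦ (v i : ℝ) / n) ∈ s},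
          F (fun i ↦ ((v : ι → ℤ) i : ℝ) / n)) / (n : ℝ) ^ Fintype.card ι := by
  classical
  have hnn : ((n : ℝ) ^ Fintype.card ι) ≠ 0 := by
    have := n.pos_of_neZero; positivity
  rw [BoxIntegral.integralSum]
  rw [show (prepartition n B).boxes = Finset.image (fun ν ↦ box n ν) (admissibleIndex n B) from rfl]
  rw [Finset.sum_image (fun a _ b _ h ↦ box_injective n h)]
  have hterm : ∀ ν ∈ admissibleIndex n B,
      ((volume : Measure (ι → ℝ)).toBoxAdditive.toSMul (box n ν))
        (s.indicator F ((prepartition n B).tag (box n ν)))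
      = ((n : ℝ) ^ Fintype.card ι)⁻¹ * s.indicator F (tag n ν) := by
    intro ν hν
    rw [prepartition_tag n hν, BoxAdditiveMap.toSMul_apply, Measure.toBoxAdditive_apply,
      measureReal_def, volume_box, smul_eq_mul]
    congr 1
    rw [one_div, ENNReal.toReal_inv]
    push_cast
    rfl
  rw [Finset.sum_congr rfl hterm]
  rw [show (∑' v : {v : ι → ℤ // (fun i ↦ (v i : ℝ) / n) ∈ s},
          F (fun i ↦ ((v : ι → ℤ) i : ℝ) / n))
      = ∑' v : ι → ℤ, Set.indicator {v : ι → ℤ | (fun i ↦ (v i : ℝ) / n) ∈ s}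
          (fun v ↦ F (fun i ↦ (v i : ℝ) / n)) v from
    tsum_subtype {v : ι → ℤ | (fun i ↦ (v i : ℝ) / n) ∈ s}
      (fun v ↦ F (fun i ↦ (v i : ℝ) / n))]
  rw [tsum_eq_sum (s := (admissibleIndex n B).image (· + 1))
    (f := Set.indicator {v : ι → ℤ | (fun i ↦ (v i : ℝ) / n) ∈ s}
      (fun v ↦ F (fun i ↦ (v i : ℝ) / n)))
    (by
      intro v hv
      refine Set.indicator_of_notMem (fun hvs ↦ hv ?_) _
      have htag : tag n (v - 1) = fun i ↦ (v i : ℝ) / n := by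
        funext i; simp only [tag_apply, Pi.sub_apply, Pi.one_apply]; push_cast; ring
      have hvs' : tag n (v - 1) ∈ s := by rw [htag]; exact hvs
      have : v - 1 ∈ admissibleIndex n B := by
        have := mem_admissibleIndex_of_mem_box n hB (hs hvs')
        rwa [index_tag] at this
      exact Finset.mem_image.mpr ⟨v - 1, this, by abel⟩)]
  rw [Finset.sum_image (by intro a _ b _ h; simpa using h)]
  rw [Finset.sum_div]
  refine Finset.sum_congr rfl fun ν hν ↦ ?_
  have hfun : (fun i ↦ (((ν + 1 : ι → ℤ) i : ℝ)) / n) = tag n ν := by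
    funext i; simp only [tag_apply, Pi.add_apply, Pi.one_apply]; push_cast; ring
  simp only [Set.indicator, Set.mem_setOf_eq, hfun]
  rw [div_eq_inv_mul]

private lemma tendsto_riemann_sum (F : (ι → ℝ) → ℝ) (s : Set (ι → ℝ)) (hF : Continuous F)
    (hb : IsBounded s) (hm : MeasurableSet s) (hfr : volume (frontier s) = 0) :
    Tendsto (fun n : ℕ ↦
        (∑' v : {v : ι → ℤ // (fun i ↦ (v i : ℝ) / n) ∈ s},
          F (fun i ↦ ((v : ι → ℤ) i : ℝ) / n)) / (n : ℝ) ^ Fintype.card ι)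
      atTop (𝓝 (∫ x in s, F x)) := by
  obtain ⟨B, hB, hsB⟩ := BoxIntegral.le_hasIntegralVertices_of_isBounded hb
  obtain ⟨M, hM⟩ := B.isCompact_Icc.exists_bound_of_continuousOn hF.continuousOn
  have hbound : ∀ x ∈ Box.Icc B, ‖s.indicator F x‖ ≤ M := fun x hx ↦
    (norm_indicator_le_norm_self F x).trans (hM x hx)
  have hae : ∀ᵐ x : (ι → ℝ), ContinuousAt (s.indicator F) x := by
    have h0 : ∀ᵐ x : (ι → ℝ), x ∉ frontier s := measure_eq_zero_iff_ae_notMem.mp hfr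
    filter_upwards [h0] with x hx
    rw [frontier_eq_closure_inter_closure, Set.mem_inter_iff, not_and_or] at hx
    rcases hx with hx | hx
    · have hev : s.indicator F =ᶠ[𝓝 x] fun _ ↦ 0 := by
        filter_upwards [isClosed_closure.isOpen_compl.mem_nhds hx] with y hy
        exact Set.indicator_of_notMem (fun h ↦ hy (subset_closure h)) F
      exact ContinuousAt.congr continuousAt_const hev.symm
    · have hx' : x ∈ interior s := by
        rwa [closure_compl, Set.mem_compl_iff, not_not] at hx
      have hev : s.indicator F =ᶠ[𝓝 x] F := by
        filter_upwards [isOpen_interior.mem_nhds hx'] with y hy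
        exact Set.indicator_of_mem (interior_subset hy) F
      exact ContinuousAt.congr hF.continuousAt hev.symm
  have hInt : HasIntegral B .Riemann (s.indicator F)
      ((volume : Measure (ι → ℝ)).toBoxAdditive.toSMul) (∫ x in s, F x) := by
    have := AEContinuous.hasBoxIntegral (volume : Measure (ι → ℝ)) ⟨M, hbound⟩ hae
      IntegrationParams.Riemann
    rwa [MeasureTheory.setIntegral_indicator hm,
      Set.inter_eq_self_of_subset_right hsB] at this
  rw [Metric.tendsto_atTop]
  intro ε hε
  obtain ⟨r, hr₁, hr₂⟩ := hasIntegral_iff.mp hInt (ε / 2) (by positivity)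
  have hr0 : (0 : ℝ) < r 1 0 := (r 1 0).2
  obtain ⟨N, hN⟩ := exists_nat_gt (1 / (r 1 0 : ℝ))
  refine ⟨max N 1, fun n hn ↦ ?_⟩
  have hn1 : 1 ≤ n := le_trans (le_max_right _ _) hn
  haveI : NeZero n := ⟨by omega⟩
  have hnN : (N : ℝ) ≤ n := Nat.cast_le.mpr (le_trans (le_max_left _ _) hn)
  have hrn : 1 / (n : ℝ) ≤ r 1 0 := by
    rw [div_le_iff₀ (by positivity)]
    rw [div_lt_iff₀ hr0] at hN
    nlinarith
  have heq : (r 1) = fun _ ↦ r 1 0 := funext fun x ↦ hr₁ 1 rfl x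
  have hmem : IntegrationParams.MemBaseSet .Riemann B 1 (r 1) (prepartition n B) := by
    refine ⟨?_, fun _ ↦ prepartition_isHenstock n B,
      fun h ↦ by simp [IntegrationParams.Riemann] at h,
      fun h ↦ by simp [IntegrationParams.Riemann] at h⟩
    rw [heq]
    exact prepartition_isSubordinate n B hr0 hrn
  have hclose := hr₂ 1 _ hmem (prepartition_isPartition n hB)
  rw [integralSum_prepartition F s hB hsB n] at hclose
  calc dist _ _ ≤ ε / 2 := hclose
  _ < ε := by linarith

end RiemannSum

private lemma eval_smul_of_isHomogeneous {σ : Type*} {p : MvPolynomial σ ℝ} {n : ℕ}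
    (hp : p.IsHomogeneous n) (c : ℝ) (x : σ → ℝ) :
    MvPolynomial.eval (c • x) p = c ^ n * MvPolynomial.eval x p := by
  rw [MvPolynomial.eval_eq, MvPolynomial.eval_eq, Finset.mul_sum]
  refine Finset.sum_congr rfl fun e he ↦ ?_
  have hdeg : e.degree = n := by
    by_contra h
    exact (MvPolynomial.mem_support_iff.mp he) (hp.coeff_eq_zero h)
  calc MvPolynomial.coeff e p * ∏ i ∈ e.support, (c • x) i ^ e i
      = MvPolynomial.coeff e p * ∏ i ∈ e.support, (c ^ e i * x i ^ e i) := by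
        simp [mul_pow, Pi.smul_apply, smul_eq_mul]
    _ = c ^ n * (MvPolynomial.coeff e p * ∏ i ∈ e.support, x i ^ e i) := by
        rw [Finset.prod_mul_distrib, Finset.prod_pow_eq_pow_sum]
        rw [show ∑ i ∈ e.support, e i = n from hdeg]
        ring

private lemma poly_eq_sum_homog {σ : Type*} (f : MvPolynomial σ ℝ) {d : ℕ}
    (hdeg : f.totalDegree ≤ d) :
    f = ∑ j ∈ Finset.range (d + 1), MvPolynomial.homogeneousComponent j f := by
  conv_lhs => rw [← MvPolynomial.sum_homogeneousComponent f]
  exact Finset.sum_subset (Finset.range_subset_range.mpr (by omega))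
    (fun j _ hj ↦ MvPolynomial.homogeneousComponent_eq_zero j f
      (by simp only [Finset.mem_range, not_lt] at hj; omega))

/-- let `C ⊆ ℝ^{q+1}` be a closed strongly convex full-dimensional cone
contained in the half-space `x_{q+1} ≥ 0`, meeting `x_{q+1} = 0` only at the origin,
and let `Δ = C ∩ {x_{q+1} = 1}`.  For a polynomial `f` of degree (at most) `d` with
top-degree homogeneous component `f⁽ᵈ⁾`, the sums of `f` over the integral points of `C`
at level `k`, divided by `k^{q+d}`, tend to `∫_Δ f⁽ᵈ⁾ dμ`,  `μ` being the `q`-dimensional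
Lebesgue measure on the hyperplane `x_{q+1} = 1`. -/
theorem stmt4 {q : ℕ} (C : Set (Fin (q + 1) → ℝ))
    (hclosed : IsClosed C) (hconvex : Convex ℝ C)
    (hcone : ∀ x ∈ C, ∀ c : ℝ, 0 ≤ c → c • x ∈ C)
    (hline : ∀ x ∈ C, -x ∈ C → x = 0)
    (hdim : Submodule.span ℝ C = ⊤)
    (hhalf : ∀ x ∈ C, 0 ≤ x (Fin.last q))
    (hlevel : ∀ x ∈ C, x (Fin.last q) = 0 → x = 0)
    (f : MvPolynomial (Fin (q + 1)) ℝ) (d : ℕ) (hdeg : f.totalDegree ≤ d) :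
    Tendsto (fun k : ℕ =>
        (∑' x : {x : Fin (q + 1) → ℤ //
            (fun i => (x i : ℝ)) ∈ C ∧ x (Fin.last q) = (k : ℤ)},
          MvPolynomial.eval (fun i => ((x : Fin (q + 1) → ℤ) i : ℝ)) f) / (k : ℝ) ^ (q + d))
      atTop
      (𝓝 (∫ y in {y : Fin q → ℝ | Fin.snoc y (1 : ℝ) ∈ C},
            MvPolynomial.eval (Fin.snoc y (1 : ℝ)) (MvPolynomial.homogeneousComponent d f))) := by
  classical
  set Δ : Set (Fin q → ℝ) := {y : Fin q → ℝ | Fin.snoc y (1 : ℝ) ∈ C} with hΔdef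
  have hsnoc_cont : Continuous (fun y : Fin q → ℝ ↦ (Fin.snoc y (1 : ℝ) : Fin (q + 1) → ℝ)) := by
    refine continuous_pi fun i ↦ ?_
    refine Fin.lastCases ?_ (fun j ↦ ?_) i
    · simp only [Fin.snoc_last]; exact continuous_const
    · simp only [Fin.snoc_castSucc]; exact continuous_apply j
  have hΔclosed : IsClosed Δ := hclosed.preimage hsnoc_cont
  have hΔconv : Convex ℝ Δ := by
    intro y hy z hz a b ha hb hab
    have heq : (Fin.snoc (a • y + b • z) (1 : ℝ) : Fin (q + 1) → ℝ)
        = a • (Fin.snoc y (1 : ℝ) : Fin (q + 1) → ℝ)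
          + b • (Fin.snoc z (1 : ℝ) : Fin (q + 1) → ℝ) := by
      funext i
      refine Fin.lastCases ?_ (fun j ↦ ?_) i
      · simp [Fin.snoc_last, hab]
      · simp [Fin.snoc_castSucc]
    show Fin.snoc (a • y + b • z) (1 : ℝ) ∈ C
    rw [heq]
    exact hconvex hy hz ha hb hab
  have hmem1 : ∀ y ∈ Δ, (1 : ℝ) ≤ ‖(Fin.snoc y (1 : ℝ) : Fin (q + 1) → ℝ)‖ := by
    intro y hy
    have := norm_le_pi_norm (Fin.snoc y (1 : ℝ) : Fin (q + 1) → ℝ) (Fin.last q)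
    simpa [Fin.snoc_last] using this
  have hsphere : ∀ y ∈ Δ, (‖(Fin.snoc y (1:ℝ) : Fin (q+1) → ℝ)‖⁻¹ •
      (Fin.snoc y (1:ℝ) : Fin (q+1) → ℝ)) ∈ C ∩ Metric.sphere (0 : Fin (q+1) → ℝ) 1 := by
    intro y hy
    have h1 := hmem1 y hy
    refine ⟨hcone _ hy _ (inv_nonneg.mpr (norm_nonneg _)), ?_⟩
    simp only [Metric.mem_sphere, dist_zero_right, norm_smul, norm_inv, norm_norm]
    rw [inv_mul_cancel₀ (by linarith)]
  have hΔbdd : Bornology.IsBounded Δ := by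
    by_cases hne : (C ∩ Metric.sphere (0 : Fin (q + 1) → ℝ) 1).Nonempty
    · have hKcomp : IsCompact (C ∩ Metric.sphere (0 : Fin (q + 1) → ℝ) 1) :=
        (isCompact_sphere 0 1).inter_left hclosed
      obtain ⟨x₀, hx₀, hmin⟩ := hKcomp.exists_isMinOn hne
        ((continuous_apply (Fin.last q)).continuousOn)
      have hx₀ne : x₀ ≠ 0 := by
        intro h
        have := hx₀.2
        rw [h] at this
        simp at this
      have hεpos : 0 < x₀ (Fin.last q) := by
        rcases (hhalf x₀ hx₀.1).lt_or_eq with h | h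
        · exact h
        · exact absurd (hlevel x₀ hx₀.1 h.symm) hx₀ne
      rw [Metric.isBounded_iff_subset_closedBall 0]
      refine ⟨(x₀ (Fin.last q))⁻¹, fun y hy ↦ ?_⟩
      set x : Fin (q + 1) → ℝ := Fin.snoc y 1 with hxdef
      have hxnorm : (1 : ℝ) ≤ ‖x‖ := hmem1 y hy
      have hεle : x₀ (Fin.last q) ≤ ‖x‖⁻¹ := by
        have h2 := hmin (hsphere y hy)
        simpa [Pi.smul_apply, smul_eq_mul, hxdef, Fin.snoc_last] using h2
      have hxle : ‖x‖ ≤ (x₀ (Fin.last q))⁻¹ := by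
        rw [← inv_inv ‖x‖]
        exact inv_anti₀ hεpos hεle
      have hyx : ‖y‖ ≤ ‖x‖ := by
        rw [pi_norm_le_iff_of_nonneg (norm_nonneg x)]
        intro i
        have := norm_le_pi_norm x (Fin.castSucc i)
        simpa [hxdef, Fin.snoc_castSucc] using this
      rw [mem_closedBall_zero_iff]
      linarith
    · rw [Metric.isBounded_iff_subset_closedBall 0]
      exact ⟨0, fun y hy ↦ absurd ⟨_, hsphere y hy⟩ hne⟩
  have hΔfr : volume (frontier Δ) = 0 := hΔconv.addHaar_frontier volume
  -- homogeneous components evaluated on the slice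
  set g : ℕ → (Fin q → ℝ) → ℝ := fun j y ↦
    MvPolynomial.eval (Fin.snoc y (1 : ℝ)) (MvPolynomial.homogeneousComponent j f) with hgdef
  have hgcont : ∀ j, Continuous (g j) :=
    fun j ↦ (MvPolynomial.continuous_eval _).comp hsnoc_cont
  -- the Riemann sums
  set T : ℕ → ℕ → ℝ := fun j k ↦
    ∑' v : {v : Fin q → ℤ // (fun i ↦ (v i : ℝ) / (k : ℕ)) ∈ Δ},
      g j (fun i ↦ ((v : Fin q → ℤ) i : ℝ) / (k : ℕ)) with hTdef
  have hT : ∀ j, Tendsto (fun k : ℕ ↦ T j k / (k : ℝ) ^ q) atTop (𝓝 (∫ y in Δ, g j y)) := by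
    intro j
    have := tendsto_riemann_sum (g j) Δ (hgcont j) hΔbdd hΔclosed.measurableSet hΔfr
    simpa only [Fintype.card_fin] using this
  -- the limit function
  set G : ℕ → ℝ := fun k ↦
    ∑ j ∈ Finset.range (d + 1), ((k : ℝ)⁻¹) ^ (d - j) * (T j k / (k : ℝ) ^ q) with hGdef
  have hG : Tendsto G atTop (𝓝 (∫ y in Δ, g d y)) := by
    have hsum : (∫ y in Δ, g d y)
        = ∑ j ∈ Finset.range (d + 1), (if j = d then ∫ y in Δ, g j y else 0) := by
      rw [Finset.sum_ite_eq' (Finset.range (d + 1)) d (fun j ↦ ∫ y in Δ, g j y)]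
      simp [Finset.mem_range]
    rw [hsum]
    refine tendsto_finset_sum _ fun j hj ↦ ?_
    rcases eq_or_ne j d with rfl | hjd
    · simp only [if_pos rfl, Nat.sub_self, pow_zero, one_mul]
      exact hT j
    · simp only [if_neg hjd]
      have h0 : Tendsto (fun k : ℕ ↦ ((k : ℝ)⁻¹) ^ (d - j)) atTop (𝓝 0) := by
      -- (k : ℝ)⁻¹ → 0, then pow with positive exponent
        have h1 : Tendsto (fun k : ℕ ↦ ((k : ℝ))⁻¹) atTop (𝓝 0) :=
          tendsto_inv_atTop_zero.comp tendsto_natCast_atTop_atTop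
        have hd : d - j ≠ 0 := by
          simp only [Finset.mem_range] at hj
          omega
        have := h1.pow (d - j)
        rwa [zero_pow hd] at this
      simpa using h0.mul (hT j)
  -- equality of the two sequences for k ≥ 1
  have key : ∀ k : ℕ, 1 ≤ k →
      (∑' x : {x : Fin (q + 1) → ℤ //
            (fun i => (x i : ℝ)) ∈ C ∧ x (Fin.last q) = (k : ℤ)},
          MvPolynomial.eval (fun i => ((x : Fin (q + 1) → ℤ) i : ℝ)) f) / (k : ℝ) ^ (q + d)
        = G k := by
    intro k hk
    have hk0 : (0 : ℝ) < (k : ℝ) := by exact_mod_cast Nat.pos_of_ne_zero (by omega)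
    have hkne : (k : ℝ) ≠ 0 := ne_of_gt hk0
    have hsnoc_eq : ∀ v : Fin q → ℤ,
        (fun i ↦ ((Fin.snoc v (k : ℤ) : Fin (q + 1) → ℤ) i : ℝ))
          = (k : ℝ) • (Fin.snoc (fun i ↦ (v i : ℝ) / k) (1 : ℝ) : Fin (q + 1) → ℝ) := by
      intro v; funext i
      refine Fin.lastCases ?_ (fun j ↦ ?_) i
      · simp [Fin.snoc_last]
      · simp only [Fin.snoc_castSucc, Pi.smul_apply, smul_eq_mul]
        field_simp
    have hmem_iff : ∀ v : Fin q → ℤ, (fun i ↦ (v i : ℝ) / k) ∈ Δ ↔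
        ((fun i ↦ ((Fin.snoc v (k : ℤ) : Fin (q + 1) → ℤ) i : ℝ)) ∈ C) := by
      intro v
      constructor
      · intro hv
        rw [hsnoc_eq v]
        exact hcone _ hv _ (le_of_lt hk0)
      · intro hv
        have h2 := hcone _ hv ((k : ℝ)⁻¹) (inv_nonneg.mpr (le_of_lt hk0))
        rw [hsnoc_eq v, smul_smul, inv_mul_cancel₀ hkne, one_smul] at h2
        exact h2
    have hsnocx : ∀ x : {x : Fin (q + 1) → ℤ //
        (fun i ↦ (x i : ℝ)) ∈ C ∧ x (Fin.last q) = (k : ℤ)},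
        (Fin.snoc (fun i ↦ x.1 (Fin.castSucc i)) (k : ℤ) : Fin (q + 1) → ℤ) = x.1 := by
      intro x
      funext i
      refine Fin.lastCases ?_ (fun j ↦ ?_) i
      · rw [Fin.snoc_last]
        exact x.2.2.symm
      · rw [Fin.snoc_castSucc]
    let e : {v : Fin q → ℤ // (fun i ↦ (v i : ℝ) / (k : ℕ)) ∈ Δ} ≃
        {x : Fin (q + 1) → ℤ // (fun i ↦ (x i : ℝ)) ∈ C ∧ x (Fin.last q) = (k : ℤ)} :=
      { toFun := fun v ↦ ⟨Fin.snoc v.1 (k : ℤ), (hmem_iff v.1).mp v.2, by simp [Fin.snoc_last]⟩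
        invFun := fun x ↦ ⟨fun i ↦ x.1 (Fin.castSucc i), by
          refine (hmem_iff _).mpr ?_
          rw [hsnocx x]
          exact x.2.1⟩
        left_inv := fun v ↦ Subtype.ext (by
          funext i
          show (Fin.snoc (v.1 : Fin q → ℤ) (k : ℤ) : Fin (q + 1) → ℤ) (Fin.castSucc i) = v.1 i
          exact Fin.snoc_castSucc _ _ _)
        right_inv := fun x ↦ Subtype.ext (hsnocx x) }
    haveI hfin : Finite {v : Fin q → ℤ // (fun i ↦ (v i : ℝ) / (k : ℕ)) ∈ Δ} :=
      (latticeSet_finite hΔbdd (show k ≠ 0 by omega)).to_subtype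
    have h1 : (∑' x : {x : Fin (q + 1) → ℤ //
            (fun i => (x i : ℝ)) ∈ C ∧ x (Fin.last q) = (k : ℤ)},
          MvPolynomial.eval (fun i => ((x : Fin (q + 1) → ℤ) i : ℝ)) f)
        = ∑' v : {v : Fin q → ℤ // (fun i ↦ (v i : ℝ) / (k : ℕ)) ∈ Δ},
            MvPolynomial.eval
              (fun i ↦ ((Fin.snoc ((v : Fin q → ℤ)) (k : ℤ) : Fin (q + 1) → ℤ) i : ℝ)) f := by
      rw [← Equiv.tsum_eq e (fun x ↦
        MvPolynomial.eval (fun i => ((x : Fin (q + 1) → ℤ) i : ℝ)) f)]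
      exact tsum_congr fun v ↦ rfl
    have h2 : ∀ v : Fin q → ℤ,
        MvPolynomial.eval (fun i ↦ ((Fin.snoc v (k : ℤ) : Fin (q + 1) → ℤ) i : ℝ)) f
          = ∑ j ∈ Finset.range (d + 1),
              (k : ℝ) ^ j * g j (fun i ↦ (v i : ℝ) / k) := by
      intro v
      conv_lhs => rw [poly_eq_sum_homog f hdeg, map_sum]
      refine Finset.sum_congr rfl fun j _ ↦ ?_
      rw [hsnoc_eq v,
        eval_smul_of_isHomogeneous (MvPolynomial.homogeneousComponent_isHomogeneous j f)]
    have h2' : (fun v : {v : Fin q → ℤ // (fun i ↦ (v i : ℝ) / (k : ℕ)) ∈ Δ} ↦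
        MvPolynomial.eval
          (fun i ↦ ((Fin.snoc ((v : Fin q → ℤ)) (k : ℤ) : Fin (q + 1) → ℤ) i : ℝ)) f)
        = fun v : {v : Fin q → ℤ // (fun i ↦ (v i : ℝ) / (k : ℕ)) ∈ Δ} ↦
            ∑ j ∈ Finset.range (d + 1),
            (k : ℝ) ^ j * g j (fun i ↦ (((v : Fin q → ℤ)) i : ℝ) / k) :=
      funext fun v ↦ h2 v.1
    rw [h1, h2']
    rw [Summable.tsum_finsetSum (fun j _ ↦ Summable.of_finite)]
    have h3 : ∀ j, (∑' v : {v : Fin q → ℤ // (fun i ↦ (v i : ℝ) / (k : ℕ)) ∈ Δ},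
        (k : ℝ) ^ j * g j (fun i ↦ (((v : Fin q → ℤ)) i : ℝ) / k)) = (k : ℝ) ^ j * T j k :=
      fun j ↦ tsum_mul_left
    rw [Finset.sum_congr rfl fun j _ ↦ h3 j]
    rw [Finset.sum_div, hGdef]
    refine Finset.sum_congr rfl fun j hj ↦ ?_
    have hjd : j ≤ d := by
      simp only [Finset.mem_range] at hj
      omega
    have hsplit : (k : ℝ) ^ (q + d) = (k : ℝ) ^ j * ((k : ℝ) ^ (d - j) * (k : ℝ) ^ q) := by
      rw [← pow_add, ← pow_add]
      congr 1
      omega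
    rw [hsplit, mul_div_mul_left _ _ (pow_ne_zero j hkne), inv_pow, inv_mul_eq_div, div_div,
      mul_comm ((k : ℝ) ^ q)]
  refine Tendsto.congr' ?_ hG
  filter_upwards [eventually_ge_atTop 1] with k hk
  exact (key k hk).symm
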